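/- arXiv:1102.1061 — 2 statements merged into one kernel-verified Lean document; each statement's English description precedes it below -/
import Mathlib

section
/- Reflection for the universal IK-CPS model: for any formula A and context Γ, if there is a neutral proof term e with Γ ⊢ e : A in MQC, then Γ forces A in the universal model. -/
/-- First-order formulas of minimal predicate logic (MQC), with atomic
formulas drawn from `Atm` and quantification encoded via functions from
individual terms `Trm` (weak HOAS). -/
inductive Fml (Atm Trm : Type) : Type where
  | atom : Atm → Fml Atm Trm
  | and : Fml Atm Trm → Fml Atm Trm → Fml Atm Trm
  | or : Fml Atm Trm → Fml Atm Trm → Fml Atm Trm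
  | imp : Fml Atm Trm → Fml Atm Trm → Fml Atm Trm
  | all : (Trm → Fml Atm Trm) → Fml Atm Trm
  | ex : (Trm → Fml Atm Trm) → Fml Atm Trm

/-- An Intuitionistic Kripke-CPS model. -/
structure IKCPS (Atm Trm : Type) where
  W : Type
  le : W → W → Prop
  le_refl : ∀ w, le w w
  le_trans : ∀ {a b c}, le a b → le b c → le a c
  /-- binary exploding relation between worlds and formulas -/
  explode : W → Fml Atm Trm → Prop
  /-- strong forcing of atomic formulas -/
  satom : W → Atm → Prop
  satom_mono : ∀ {w w' X}, le w w' → satom w X → satom w' X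
  Dom : W → Set Trm
  Dom_mono : ∀ {w w'}, le w w' → Dom w ⊆ Dom w'

namespace IKCPS

variable {Atm Trm : Type}

/-- The continuation ("forcing") monad over a predicate `S` of strong forcing:
`w ⊩ A` iff for all formulas `C`, for all `w' ≥ w`,
`(∀ w'' ≥ w', w'' ⊩ₛ A → w'' ⊩_E C) → w' ⊩_E C`. -/
def fa (M : IKCPS Atm Trm) (S : M.W → Prop) (w : M.W) : Prop :=
  ∀ C : Fml Atm Trm, ∀ w', M.le w w' →
    (∀ w'', M.le w' w'' → S w'' → M.explode w'' C) → M.explode w' C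

/-- Strong forcing, extended from atomic to composite formulas. -/
def sforces (M : IKCPS Atm Trm) : Fml Atm Trm → M.W → Prop
  | .atom X => fun w => M.satom w X
  | .and A B => fun w => M.fa (M.sforces A) w ∧ M.fa (M.sforces B) w
  | .or A B => fun w => M.fa (M.sforces A) w ∨ M.fa (M.sforces B) w
  | .imp A B => fun w => ∀ w', M.le w w' → M.fa (M.sforces A) w' → M.fa (M.sforces B) w'
  | .all A => fun w => ∀ w', M.le w w' → ∀ t ∈ M.Dom w', M.fa (M.sforces (A t)) w'
  | .ex A => fun w => ∃ t ∈ M.Dom w, M.fa (M.sforces (A t)) w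

/-- (Non-strong) forcing. -/
def forces (M : IKCPS Atm Trm) (A : Fml Atm Trm) (w : M.W) : Prop :=
  M.fa (M.sforces A) w

end IKCPS

/-- Natural deduction for minimal intuitionistic predicate logic (MQC).
`Deriv Γ A` states that there is a proof term `p` with `Γ ⊢ p : A`. -/
inductive Deriv {Atm Trm : Type} : List (Fml Atm Trm) → Fml Atm Trm → Prop where
  | ax {Γ A} : A ∈ Γ → Deriv Γ A
  | andI {Γ A B} : Deriv Γ A → Deriv Γ B → Deriv Γ (.and A B)
  | andE1 {Γ A B} : Deriv Γ (.and A B) → Deriv Γ A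
  | andE2 {Γ A B} : Deriv Γ (.and A B) → Deriv Γ B
  | orI1 {Γ A B} : Deriv Γ A → Deriv Γ (.or A B)
  | orI2 {Γ A B} : Deriv Γ B → Deriv Γ (.or A B)
  | orE {Γ A B C} : Deriv Γ (.or A B) → Deriv (A :: Γ) C → Deriv (B :: Γ) C → Deriv Γ C
  | impI {Γ A B} : Deriv (A :: Γ) B → Deriv Γ (.imp A B)
  | impE {Γ A B} : Deriv Γ (.imp A B) → Deriv Γ A → Deriv Γ B
  | allI {Γ A} : (∀ t, Deriv Γ (A t)) → Deriv Γ (.all A)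
  | allE {Γ A} (t : Trm) : Deriv Γ (.all A) → Deriv Γ (A t)
  | exI {Γ A} (t : Trm) : Deriv Γ (A t) → Deriv Γ (.ex A)
  | exE {Γ A C} : Deriv Γ (.ex A) → (∀ t, Deriv (A t :: Γ) C) → Deriv Γ C

/-- Normal (`b = true`) and neutral (`b = false`) natural deduction derivations,
defined simultaneously.  `NND true Γ A` means there is a proof term in normal
form `r` with `Γ ⊢ r : A`; `NND false Γ A` means there is a neutral proof term
`e` with `Γ ⊢ e : A`. -/
inductive NND {Atm Trm : Type} : Bool → List (Fml Atm Trm) → Fml Atm Trm → Prop where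
  | ne {Γ A} : NND false Γ A → NND true Γ A
  | ax {Γ A} : A ∈ Γ → NND false Γ A
  | andI {Γ A B} : NND true Γ A → NND true Γ B → NND true Γ (.and A B)
  | andE1 {Γ A B} : NND false Γ (.and A B) → NND false Γ A
  | andE2 {Γ A B} : NND false Γ (.and A B) → NND false Γ B
  | orI1 {Γ A B} : NND true Γ A → NND true Γ (.or A B)
  | orI2 {Γ A B} : NND true Γ B → NND true Γ (.or A B)
  | orE {Γ A B C} : NND false Γ (.or A B) → NND true (A :: Γ) C → NND true (B :: Γ) C →
      NND false Γ C
  | impI {Γ A B} : NND true (A :: Γ) B → NND true Γ (.imp A B)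
  | impE {Γ A B} : NND false Γ (.imp A B) → NND true Γ A → NND false Γ B
  | allI {Γ A} : (∀ t, NND true Γ (A t)) → NND true Γ (.all A)
  | allE {Γ A} (t : Trm) : NND false Γ (.all A) → NND false Γ (A t)
  | exI {Γ A} (t : Trm) : NND true Γ (A t) → NND true Γ (.ex A)
  | exE {Γ A C} : NND false Γ (.ex A) → (∀ t, NND true (A t :: Γ) C) → NND false Γ C

/-- There is a normal-form derivation `Γ ⊢ r : A`. -/
def NfD {Atm Trm : Type} (Γ : List (Fml Atm Trm)) (A : Fml Atm Trm) : Prop :=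
  NND true Γ A

/-- There is a neutral derivation `Γ ⊢ e : A`. -/
def NeD {Atm Trm : Type} (Γ : List (Fml Atm Trm)) (A : Fml Atm Trm) : Prop :=
  NND false Γ A

theorem NND.weaken {Atm Trm : Type} {b : Bool} {Γ Γ' : List (Fml Atm Trm)}
    {A : Fml Atm Trm} (d : NND b Γ A) (h : Γ ⊆ Γ') : NND b Γ' A := by
  induction d generalizing Γ' with
  | ne _ ih => exact .ne (ih h)
  | ax hm => exact .ax (h hm)
  | andI _ _ ih1 ih2 => exact .andI (ih1 h) (ih2 h)
  | andE1 _ ih => exact .andE1 (ih h)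
  | andE2 _ ih => exact .andE2 (ih h)
  | orI1 _ ih => exact .orI1 (ih h)
  | orI2 _ ih => exact .orI2 (ih h)
  | orE _ _ _ ih ih1 ih2 =>
      exact .orE (ih h) (ih1 (List.cons_subset_cons _ h)) (ih2 (List.cons_subset_cons _ h))
  | impI _ ih => exact .impI (ih (List.cons_subset_cons _ h))
  | impE _ _ ih1 ih2 => exact .impE (ih1 h) (ih2 h)
  | allI _ ih => exact .allI fun t => ih t h
  | allE t _ ih => exact .allE t (ih h)
  | exI t _ ih => exact .exI t (ih h)
  | exE _ _ ih ih2 => exact .exE (ih h) fun t => ih2 t (List.cons_subset_cons _ h)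

/-- The universal IK-CPS model: worlds are contexts of MQC ordered by
inclusion, strong forcing of an atom and the exploding relation are given by
normal-form derivability, and the domain of quantification is constant. -/
def univModel (Atm Trm : Type) : IKCPS Atm Trm where
  W := List (Fml Atm Trm)
  le Γ Γ' := Γ ⊆ Γ'
  le_refl _ := List.Subset.refl _
  le_trans h1 h2 := List.Subset.trans h1 h2
  explode Γ C := NfD Γ C
  satom Γ X := NfD Γ (.atom X)
  satom_mono h d := d.weaken h
  Dom _ := Set.univ
  Dom_mono _ := le_rfl

private theorem reify_reflect {Atm Trm : Type} (A : Fml Atm Trm) :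
    (∀ Γ, (univModel Atm Trm).forces A Γ → NfD Γ A) ∧
    (∀ Γ, NeD Γ A → (univModel Atm Trm).forces A Γ) := by
  induction A with
  | atom X =>
    constructor
    · intro Γ h
      exact h (.atom X) Γ (List.Subset.refl _) (fun Γ'' _ s => s)
    · intro Γ e C Γ' le k
      exact k Γ' (List.Subset.refl _) (NND.ne (e.weaken le))
  | and A B ihA ihB =>
    constructor
    · intro Γ h
      refine h (.and A B) Γ (List.Subset.refl _) (fun Γ'' _ s => ?_)
      exact NND.andI (ihA.1 Γ'' s.1) (ihB.1 Γ'' s.2)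
    · intro Γ e C Γ' le k
      exact k Γ' (List.Subset.refl _)
        ⟨ihA.2 Γ' (NND.andE1 (e.weaken le)), ihB.2 Γ' (NND.andE2 (e.weaken le))⟩
  | or A B ihA ihB =>
    constructor
    · intro Γ h
      refine h (.or A B) Γ (List.Subset.refl _) (fun Γ'' _ s => ?_)
      rcases s with s | s
      · exact NND.orI1 (ihA.1 Γ'' s)
      · exact NND.orI2 (ihB.1 Γ'' s)
    · intro Γ e C Γ' le k
      have hA : NfD (A :: Γ') C :=
        k (A :: Γ') (List.subset_cons_self _ _)
          (Or.inl (ihA.2 _ (NND.ax List.mem_cons_self)))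
      have hB : NfD (B :: Γ') C :=
        k (B :: Γ') (List.subset_cons_self _ _)
          (Or.inr (ihB.2 _ (NND.ax List.mem_cons_self)))
      exact NND.ne (NND.orE (e.weaken le) hA hB)
  | imp A B ihA ihB =>
    constructor
    · intro Γ h
      refine h (.imp A B) Γ (List.Subset.refl _) (fun Γ'' _ s => ?_)
      have : (univModel Atm Trm).forces B (A :: Γ'') :=
        s (A :: Γ'') (List.subset_cons_self _ _)
          (ihA.2 _ (NND.ax List.mem_cons_self))
      exact NND.impI (ihB.1 _ this)
    · intro Γ e C Γ' le k
      refine k Γ' (List.Subset.refl _) ?_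
      intro Γ'' le' fA
      exact ihB.2 Γ'' (NND.impE (e.weaken (List.Subset.trans le le')) (ihA.1 Γ'' fA))
  | all A ih =>
    constructor
    · intro Γ h
      refine h (.all A) Γ (List.Subset.refl _) (fun Γ'' _ s => ?_)
      exact NND.allI fun t => (ih t).1 Γ'' (s Γ'' (List.Subset.refl _) t (Set.mem_univ t))
    · intro Γ e C Γ' le k
      refine k Γ' (List.Subset.refl _) ?_
      intro Γ'' le' t _
      exact (ih t).2 Γ'' (NND.allE t (e.weaken (List.Subset.trans le le')))
  | ex A ih =>
    constructor
    · intro Γ h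
      refine h (.ex A) Γ (List.Subset.refl _) (fun Γ'' _ s => ?_)
      obtain ⟨t, _, ft⟩ := s
      exact NND.exI t ((ih t).1 Γ'' ft)
    · intro Γ e C Γ' le k
      refine NND.ne (NND.exE (e.weaken le) (fun t => ?_))
      exact k (A t :: Γ') (List.subset_cons_self _ _)
        ⟨t, Set.mem_univ t, (ih t).2 _ (NND.ax List.mem_cons_self)⟩

/-- Reflection for the universal IK-CPS model: a neutral
derivation `Γ ⊢ e : A` yields forcing of `A` at `Γ`. -/
theorem reflect {Atm Trm : Type} (A : Fml Atm Trm) (Γ : List (Fml Atm Trm))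
    (h : NeD Γ A) : (univModel Atm Trm).forces A Γ :=
  (reify_reflect A).2 Γ h
end

section
/- Completeness of MQC with respect to IK-CPS models (usual formulation): if in every IK-CPS model and every world w, w ⊩ Γ implies w ⊩ A, then there exists a proof term p such that Γ ⊢ p : A in MQC. -/
section NbE

variable {Atm Trm : Type}

local notation "U" => univModel Atm Trm

/-- Reflection and reification into the universal model, proved together. -/
theorem reflect_sreify (A : Fml Atm Trm) :
    ∀ Γ : List (Fml Atm Trm),
      (NeD Γ A → (U).forces A Γ) ∧ ((U).sforces A Γ → NfD Γ A) := by
  induction A with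
  | atom X =>
      intro Γ
      refine ⟨fun hne C Γ' sub k => ?_, fun s => s⟩
      exact k Γ' (List.Subset.refl _) (NND.ne (hne.weaken sub))
  | and A B ihA ihB =>
      intro Γ
      constructor
      · intro hne C Γ' sub k
        refine k Γ' (List.Subset.refl _) ?_
        exact ⟨(ihA Γ').1 (NND.andE1 (hne.weaken sub)),
               (ihB Γ').1 (NND.andE2 (hne.weaken sub))⟩
      · rintro ⟨fa, fb⟩
        have ra : NfD Γ A := fa A Γ (List.Subset.refl _) (fun Γ'' _ s => (ihA Γ'').2 s)
        have rb : NfD Γ B := fb B Γ (List.Subset.refl _) (fun Γ'' _ s => (ihB Γ'').2 s)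
        exact NND.andI ra rb
  | or A B ihA ihB =>
      intro Γ
      constructor
      · intro hne C Γ' sub k
        refine NND.ne (NND.orE (hne.weaken sub) ?_ ?_)
        · exact k (A :: Γ') (List.subset_cons_self _ _)
            (Or.inl ((ihA (A :: Γ')).1 (NND.ax List.mem_cons_self)))
        · exact k (B :: Γ') (List.subset_cons_self _ _)
            (Or.inr ((ihB (B :: Γ')).1 (NND.ax List.mem_cons_self)))
      · rintro (fa | fb)
        · exact NND.orI1 (fa A Γ (List.Subset.refl _) (fun Γ'' _ s => (ihA Γ'').2 s))
        · exact NND.orI2 (fb B Γ (List.Subset.refl _) (fun Γ'' _ s => (ihB Γ'').2 s))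
  | imp A B ihA ihB =>
      intro Γ
      constructor
      · intro hne C Γ' sub k
        refine k Γ' (List.Subset.refl _) ?_
        intro Γ'' sub' fA
        have rA : NfD Γ'' A := fA A Γ'' (List.Subset.refl _) (fun Δ _ s => (ihA Δ).2 s)
        exact (ihB Γ'').1 (NND.impE (hne.weaken (List.Subset.trans sub sub')) rA)
      · intro s
        have fA : (U).forces A (A :: Γ) := (ihA _).1 (NND.ax List.mem_cons_self)
        have fB := s (A :: Γ) (List.subset_cons_self _ _) fA
        exact NND.impI (fB B _ (List.Subset.refl _) (fun Δ _ s' => (ihB Δ).2 s'))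
  | all A ih =>
      intro Γ
      constructor
      · intro hne C Γ' sub k
        refine k Γ' (List.Subset.refl _) ?_
        intro Γ'' sub' t _
        exact (ih t Γ'').1 (NND.allE t (hne.weaken (List.Subset.trans sub sub')))
      · intro s
        refine NND.allI fun t => ?_
        have := s Γ (List.Subset.refl _) t trivial
        exact this (A t) Γ (List.Subset.refl _) (fun Δ _ s' => (ih t Δ).2 s')
  | ex A ih =>
      intro Γ
      constructor
      · intro hne C Γ' sub k
        refine NND.ne (NND.exE (hne.weaken sub) fun t => ?_)
        exact k (A t :: Γ') (List.subset_cons_self _ _)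
          ⟨t, trivial, (ih t (A t :: Γ')).1 (NND.ax List.mem_cons_self)⟩
      · rintro ⟨t, _, f⟩
        exact NND.exI t (f (A t) Γ (List.Subset.refl _) (fun Δ _ s' => (ih t Δ).2 s'))

theorem reify {A : Fml Atm Trm} {Γ : List (Fml Atm Trm)}
    (f : (U).forces A Γ) : NfD Γ A :=
  f A Γ (List.Subset.refl _) (fun Δ _ s => (reflect_sreify A Δ).2 s)

theorem NND.toDeriv {b : Bool} {Γ : List (Fml Atm Trm)} {A : Fml Atm Trm}
    (d : NND b Γ A) : Deriv Γ A := by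
  induction d with
  | ne _ ih => exact ih
  | ax hm => exact .ax hm
  | andI _ _ ih1 ih2 => exact .andI ih1 ih2
  | andE1 _ ih => exact .andE1 ih
  | andE2 _ ih => exact .andE2 ih
  | orI1 _ ih => exact .orI1 ih
  | orI2 _ ih => exact .orI2 ih
  | orE _ _ _ ih ih1 ih2 => exact .orE ih ih1 ih2
  | impI _ ih => exact .impI ih
  | impE _ _ ih1 ih2 => exact .impE ih1 ih2
  | allI _ ih => exact .allI ih
  | allE t _ ih => exact .allE t ih
  | exI t _ ih => exact .exI t ih
  | exE _ _ ih ih2 => exact .exE ih ih2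

end NbE

/-- Completeness of MQC with respect to IK-CPS models (usual
formulation): if forcing of `Γ` entails forcing of `A` in every model at every
world, then there is a proof term `p` with `Γ ⊢ p : A`. -/
theorem completeness {Atm Trm : Type} (Γ : List (Fml Atm Trm)) (A : Fml Atm Trm)
    (h : ∀ (M : IKCPS Atm Trm) (w : M.W), (∀ B ∈ Γ, M.forces B w) → M.forces A w) :
    Deriv Γ A := by
  have f : (univModel Atm Trm).forces A Γ :=
    h (univModel Atm Trm) Γ (fun B hB => (reflect_sreify B Γ).1 (NND.ax hB))
  exact (reify f).toDeriv
end
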